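/- Let α and β be two multiplicatively independent real numbers greater than 1, and let d and e be two non-negative integers. Then the set { n^d α^n / (m^e β^m) : n, m positive integers } is dense in the positive reals (0, ∞). -/

import Mathlib

open Filter Topology
open scoped Classical

namespace Cobham

def applyWord {A B : Type*} (σ : A → List B) (w : List A) : List B := w.flatMap σ

def iterWord {A : Type*} (σ : A → List A) (n : ℕ) (w : List A) : List A :=
  (applyWord σ)^[n] w

def lengthIter {A : Type*} (σ : A → List A) (n : ℕ) (a : A) : ℕ :=
  (iterWord σ n [a]).length

def IsSubstitution {A : Type*} (σ : A → List A) : Prop :=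
  ∀ a : A, Tendsto (fun n => lengthIter σ n a) atTop atTop

def IsPrefixOfSeq {A : Type*} (w : List A) (x : ℕ → A) : Prop :=
  ∀ i : Fin w.length, w.get i = x i

def seqTake {A : Type*} (x : ℕ → A) (n : ℕ) : List A := List.ofFn (fun i : Fin n => x i)

def IsFixedPoint {A : Type*} (σ : A → List A) (x : ℕ → A) : Prop :=
  ∀ n : ℕ, IsPrefixOfSeq (applyWord σ (seqTake x n)) x

def IsProperFixedPoint {A : Type*} (σ : A → List A) (x : ℕ → A) : Prop :=
  IsFixedPoint σ x ∧ ∀ a : A, ∃ i : ℕ, x i = a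

def incidenceMatrix {A : Type*} [DecidableEq A] (σ : A → List A) : Matrix A A ℝ :=
  fun i j => ((σ j).count i : ℝ)

def IsPrimitiveMatrix {A : Type*} [Fintype A] [DecidableEq A] (M : Matrix A A ℝ) : Prop :=
  ∃ n : ℕ, 0 < n ∧ ∀ i j, 0 < (M ^ n) i j

def IsDominantEigenvalue {A : Type*} [Fintype A] [DecidableEq A] (M : Matrix A A ℝ) (α : ℝ) : Prop :=
  0 ≤ α ∧ Module.End.HasEigenvalue (Matrix.toLin' M) α ∧
    ∀ μ : ℂ, Module.End.HasEigenvalue (Matrix.toLin' (M.map Complex.ofReal)) μ → ‖μ‖ ≤ α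

def IsPerron (α : ℝ) : Prop :=
  IsIntegral ℤ α ∧ 1 ≤ α ∧
    ∀ μ : ℂ, Polynomial.aeval μ (minpoly ℤ α) = 0 → μ ≠ (α : ℂ) → ‖μ‖ < α

def MultIndep (α β : ℝ) : Prop :=
  ∀ k l : ℕ, 0 < k → 0 < l → α ^ k ≠ β ^ l

def IsUltimatelyPeriodic {C : Type*} (x : ℕ → C) : Prop :=
  ∃ p : ℕ, 0 < p ∧ ∃ N : ℕ, ∀ n : ℕ, N ≤ n → x (n + p) = x n

def IsPeriodic {C : Type*} (x : ℕ → C) : Prop :=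
  ∃ p : ℕ, 0 < p ∧ ∀ n : ℕ, x (n + p) = x n

def OccursAt {C : Type*} (w : List C) (x : ℕ → C) (i : ℕ) : Prop :=
  ∀ j : Fin w.length, w.get j = x (i + j)

def OccursInfinitely {C : Type*} (w : List C) (x : ℕ → C) : Prop :=
  ∀ N : ℕ, ∃ i : ℕ, N ≤ i ∧ OccursAt w x i

def BoundedGaps {C : Type*} (w : List C) (x : ℕ → C) : Prop :=
  ∃ g : ℕ, ∀ N : ℕ, ∃ i : ℕ, N ≤ i ∧ i < N + g ∧ OccursAt w x i

def InLanguage {C : Type*} (w : List C) (x : ℕ → C) : Prop := ∃ i : ℕ, OccursAt w x i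

def IsSubstitutiveSeq {C : Type*} (α : ℝ) (x : ℕ → C) : Prop :=
  ∃ (B : Type) (_ : Fintype B) (_ : DecidableEq B) (σ : B → List B) (y : ℕ → B) (φ : B → C),
    IsSubstitution σ ∧ IsProperFixedPoint σ y ∧
      IsDominantEigenvalue (incidenceMatrix σ) α ∧ x = φ ∘ y

def IsPrimitiveSubstitutiveSeq {C : Type*} (α : ℝ) (x : ℕ → C) : Prop :=
  ∃ (B : Type) (_ : Fintype B) (_ : DecidableEq B) (σ : B → List B) (y : ℕ → B) (φ : B → C),
    IsSubstitution σ ∧ IsPrimitiveMatrix (incidenceMatrix σ) ∧ IsProperFixedPoint σ y ∧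
      IsDominantEigenvalue (incidenceMatrix σ) α ∧ x = φ ∘ y

def HasGrowthTypeWith {A : Type*} (σ : A → List A) (a : A) (d : ℕ) (θ : ℝ) (c : ℝ) : Prop :=
  0 < c ∧ 1 ≤ θ ∧
    Tendsto (fun n : ℕ => (lengthIter σ n a : ℝ) / (c * (n : ℝ) ^ d * θ ^ n)) atTop (𝓝 1)

def HasGrowthType {A : Type*} (σ : A → List A) (a : A) (d : ℕ) (θ : ℝ) : Prop :=
  ∃ c : ℝ, HasGrowthTypeWith σ a d θ c

noncomputable def lambdaSum {A : Type*} (d : A → ℕ) (θ c : A → ℝ) (Θ : ℝ) (D : ℕ)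
    (u : List A) : ℝ :=
  (u.map (fun b => if θ b = Θ ∧ d b = D then c b else 0)).sum

def restrictSub {A : Type*} {l : ℕ} (σ : A → List A) (part : A → Fin l) (i : Fin l) :
    {a : A // part a = i} → List {a : A // part a = i} :=
  fun a => (σ a.1).filterMap (fun b => if h : part b = i then some ⟨b, h⟩ else none)

def subMatrix {A : Type*} (M : Matrix A A ℝ) (P : A → Prop) :
    Matrix {a : A // P a} {a : A // P a} ℝ := fun a b => M a.1 b.1

def SatisfiesC {A : Type*} [DecidableEq A] (σ : A → List A) (l q : ℕ)
    (part : A → Fin l) : Prop :=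
  q < l ∧ Function.Surjective part ∧
  (∀ a b : A, a ∈ σ b → part a = part b ∨
      ((part b : ℕ) < q ∧ (part b : ℕ) < (part a : ℕ))) ∧
  (∀ i : Fin l, (i : ℕ) < q →
      (∀ a b : A, part a = i → part b = i → (σ b).count a = 0) ∨
      (∀ a b : A, part a = i → part b = i → 0 < (σ b).count a)) ∧
  (∀ i : Fin l, q ≤ (i : ℕ) → ∀ a b : A, part a = i → part b = i → 0 < (σ b).count a) ∧
  (∀ i : Fin l, (i : ℕ) < q →
      ∃ j : Fin l, (i : ℕ) < (j : ℕ) ∧ ∃ a b : A, part a = j ∧ part b = i ∧ a ∈ σ b) ∧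
  (∀ i : Fin l, (∃ a b : A, part a = i ∧ part b = i ∧ 0 < (σ b).count a) →
      ∃ (a : A) (u : List A), part a = i ∧
        (σ a).filter (fun b => decide (part b = i)) = a :: u ∧
        (u = [] ↔ ((∀ b : A, part b = i → b = a) ∧ (σ a).count a = 1)))

def IsGoodSubstitution {A : Type*} [Fintype A] [DecidableEq A] (σ : A → List A) (α : ℝ) : Prop :=
  IsSubstitution σ ∧ IsDominantEigenvalue (incidenceMatrix σ) α ∧
    ∃ (l q : ℕ) (part : A → Fin l), SatisfiesC σ l q part ∧
      ∃ i : Fin l, q ≤ (i : ℕ) ∧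
        IsDominantEigenvalue (incidenceMatrix (restrictSub σ part i)) α



lemma aux_tendsto (c E : ℝ) (hc : 0 < c) :
    Tendsto (fun x : ℝ => c*x - E*Real.log x) atTop atTop := by
  have h := Real.isLittleO_log_id_atTop.const_mul_left E
  have h2 := h.def (show (0:ℝ) < c/2 by linarith)
  refine tendsto_atTop_mono' _ ?_ (tendsto_id.const_mul_atTop (half_pos hc))
  filter_upwards [h2, eventually_ge_atTop (0:ℝ)] with x hx hx0
  simp only [id, Real.norm_eq_abs, abs_of_nonneg hx0] at hx
  have : E * Real.log x ≤ |E * Real.log x| := le_abs_self _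
  simp only [id]
  nlinarith

lemma key_lemma (a b : ℝ) (d e : ℕ) (ha : 0 < a) (hb : 0 < b) (p q : ℕ) (hp : 0 < p)
    (hq : 0 < q) (t ε : ℝ) (hε : 0 < ε) (hs : 0 < (p:ℝ)*a - q*b) (h2 : (p:ℝ)*a - q*b < ε/2) :
    ∃ n m : ℕ, 0 < n ∧ 0 < m ∧
      |((n:ℝ)*a + d*Real.log n) - ((m:ℝ)*b + e*Real.log m) - t| ≤ ε := by
  set s : ℝ := (p:ℝ)*a - q*b with hsdef
  -- choose L with d/L ≤ ε/2
  obtain ⟨L, hL1, hLd⟩ : ∃ L : ℕ, 0 < L ∧ (d:ℝ) ≤ (ε/2) * L := by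
    refine ⟨max 1 ⌈(2*d)/ε⌉₊, by positivity, ?_⟩
    have h1 : ((2*d:ℝ))/ε ≤ (⌈(2*d)/ε⌉₊ : ℝ) := Nat.le_ceil _
    have h2 : ((⌈(2*d)/ε⌉₊:ℕ):ℝ) ≤ ((max 1 ⌈(2*d)/ε⌉₊ : ℕ):ℝ) := by
      exact_mod_cast Nat.le_max_right 1 _
    rw [div_le_iff₀ hε] at h1
    calc (d:ℝ) = (2*d)/2 := by ring
    _ ≤ ((⌈(2*d)/ε⌉₊:ℕ):ℝ) * ε / 2 := by linarith
    _ ≤ _ := by rw [div_le_iff₀ (by norm_num : (0:ℝ) < 2)] at *; nlinarith [hε.le]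
  -- choose M with F 0 ≤ t
  obtain ⟨M, hM1, hM⟩ : ∃ M : ℕ, 0 < M ∧
      ((L*p:ℕ):ℝ)*a + d*Real.log ((L*p:ℕ):ℝ) ≤ t + ((M*q:ℕ):ℝ)*b := by
    set A : ℝ := ((L*p:ℕ):ℝ)*a + d*Real.log ((L*p:ℕ):ℝ)
    refine ⟨max 1 ⌈(A - t)/((q:ℝ)*b)⌉₊, by positivity, ?_⟩
    have hqb : (0:ℝ) < (q:ℝ)*b := by positivity
    have h1 : (A - t)/((q:ℝ)*b) ≤ (⌈(A - t)/((q:ℝ)*b)⌉₊ : ℝ) := Nat.le_ceil _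
    have h2 : ((⌈(A-t)/((q:ℝ)*b)⌉₊:ℕ):ℝ) ≤ ((max 1 ⌈(A-t)/((q:ℝ)*b)⌉₊ : ℕ):ℝ) := by
      exact_mod_cast Nat.le_max_right 1 _
    rw [div_le_iff₀ hqb] at h1
    push_cast
    push_cast at h2
    nlinarith
  -- the walking function
  set F : ℕ → ℝ := fun k => (((L+k)*p:ℕ):ℝ)*a + d*Real.log (((L+k)*p:ℕ):ℝ)
      - ((((M+k)*q:ℕ):ℝ)*b + e*Real.log (((M+k)*q:ℕ):ℝ)) with hF
  have hF0 : F 0 ≤ t := by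
    have : (0:ℝ) ≤ e*Real.log (((M+0)*q:ℕ):ℝ) := by
      apply mul_nonneg (by positivity)
      apply Real.log_nonneg
      have : 1 ≤ (M+0)*q := Nat.one_le_iff_ne_zero.mpr (by positivity)
      exact_mod_cast this
    simp only [hF]
    simp only [Nat.add_zero] at *
    linarith [hM]
  have hstep : ∀ k, F (k+1) ≤ F k + ε := by
    intro k
    have hLk : (0:ℝ) < ((L+k)*p:ℕ) := by positivity
    have hLk1 : (0:ℝ) < ((L+k+1)*p:ℕ) := by positivity
    have hMk : (0:ℝ) < ((M+k)*q:ℕ) := by positivity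
    have hMk1 : (0:ℝ) < ((M+k+1)*q:ℕ) := by positivity
    have hlog1 : Real.log (((L+k+1)*p:ℕ):ℝ) - Real.log (((L+k)*p:ℕ):ℝ) ≤ 1/((L:ℝ)+k) := by
      rw [← Real.log_div (ne_of_gt hLk1) (ne_of_gt hLk)]
      have heq : ((((L+k+1)*p:ℕ)):ℝ) / (((L+k)*p:ℕ):ℝ) = ((L:ℝ)+k+1)/((L:ℝ)+k) := by
        push_cast
        rw [div_eq_div_iff (by positivity) (by positivity)]
        ring
      rw [heq]
      have := Real.log_le_sub_one_of_pos (show (0:ℝ) < ((L:ℝ)+k+1)/((L:ℝ)+k) by positivity)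
      have hLk' : (0:ℝ) < (L:ℝ)+k := by positivity
      have : ((L:ℝ)+k+1)/((L:ℝ)+k) - 1 = 1/((L:ℝ)+k) := by field_simp; ring
      linarith [Real.log_le_sub_one_of_pos (show (0:ℝ) < ((L:ℝ)+k+1)/((L:ℝ)+k) by positivity)]
    have hlog2 : Real.log (((M+k)*q:ℕ):ℝ) ≤ Real.log (((M+k+1)*q:ℕ):ℝ) := by
      apply Real.log_le_log hMk
      exact_mod_cast Nat.mul_le_mul_right q (Nat.le_succ _)
    have hd1 : (d:ℝ) * (Real.log (((L+k+1)*p:ℕ):ℝ) - Real.log (((L+k)*p:ℕ):ℝ)) ≤ ε/2 := by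
      have hLk' : (1:ℝ) ≤ (L:ℝ)+k := by
        have : (1:ℝ) ≤ (L:ℝ) := by exact_mod_cast hL1
        linarith [Nat.cast_nonneg (α := ℝ) k]
      have hnn : (0:ℝ) ≤ Real.log (((L+k+1)*p:ℕ):ℝ) - Real.log (((L+k)*p:ℕ):ℝ) := by
        have : Real.log (((L+k)*p:ℕ):ℝ) ≤ Real.log (((L+k+1)*p:ℕ):ℝ) := by
          apply Real.log_le_log hLk
          exact_mod_cast Nat.mul_le_mul_right p (Nat.le_succ _)
        linarith
      have h3 : (d:ℝ) * (Real.log (((L+k+1)*p:ℕ):ℝ) - Real.log (((L+k)*p:ℕ):ℝ)) ≤ (d:ℝ) * (1/((L:ℝ)+k)) :=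
        mul_le_mul_of_nonneg_left hlog1 (by positivity)
      have h4 : (d:ℝ) * (1/((L:ℝ)+k)) ≤ (d:ℝ)/(L:ℝ) := by
        rw [mul_one_div]
        apply div_le_div_of_nonneg_left (by positivity) (by exact_mod_cast hL1)
        linarith [Nat.cast_nonneg (α := ℝ) k]
      have h5 : (d:ℝ)/(L:ℝ) ≤ ε/2 := by
        rw [div_le_iff₀ (show (0:ℝ) < L by exact_mod_cast hL1)]
        linarith [hLd]
      linarith
    have hexp : F (k+1) - F k = s + (d:ℝ) * (Real.log (((L+k+1)*p:ℕ):ℝ) - Real.log (((L+k)*p:ℕ):ℝ))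
        - (e:ℝ) * (Real.log (((M+k+1)*q:ℕ):ℝ) - Real.log (((M+k)*q:ℕ):ℝ)) := by
      simp only [hF, hsdef]
      push_cast
      ring
    have he : (0:ℝ) ≤ (e:ℝ) * (Real.log (((M+k+1)*q:ℕ):ℝ) - Real.log (((M+k)*q:ℕ):ℝ)) :=
      mul_nonneg (by positivity) (by linarith)
    linarith
  have htop : ∃ k, t < F k := by
    have hten : Tendsto F atTop atTop := by
      have hinner : Tendsto (fun k : ℕ => (((M+k)*q:ℕ):ℝ)) atTop atTop := by
        apply tendsto_natCast_atTop_atTop.comp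
        apply tendsto_atTop_mono (fun k => ?_) tendsto_id
        calc (id k : ℕ) = k := rfl
        _ ≤ M + k := Nat.le_add_left _ _
        _ ≤ (M+k)*q := Nat.le_mul_of_pos_right _ hq
      have houter := aux_tendsto (s/(q:ℝ)) (e:ℝ) (by positivity)
      have hcomp := tendsto_atTop_add_const_right atTop ((L:ℝ)*p*a - (M:ℝ)*q*b - s*M) (houter.comp hinner)
      refine tendsto_atTop_mono' _ ?_ hcomp
      filter_upwards with k
      have hlog_nn : (0:ℝ) ≤ (d:ℝ)*Real.log (((L+k)*p:ℕ):ℝ) := by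
        apply mul_nonneg (by positivity)
        apply Real.log_nonneg
        have : 1 ≤ (L+k)*p := Nat.one_le_iff_ne_zero.mpr (by positivity)
        exact_mod_cast this
      have heq : (s/(q:ℝ)) * (((M+k)*q:ℕ):ℝ) = s*M + s*k := by
        push_cast
        field_simp
      simp only [Function.comp]
      rw [heq]
      push_cast at hlog_nn
      simp only [hF, hsdef]
      push_cast
      nlinarith [hlog_nn]
    obtain ⟨k, hk⟩ := (hten.eventually_gt_atTop t).exists
    exact ⟨k, hk⟩
  -- minimal k with t < F k
  classical
  let k := Nat.find htop
  have hk : t < F k := Nat.find_spec htop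
  have hk0 : k ≠ 0 := by
    intro h0
    have := hk
    rw [h0] at this
    linarith
  obtain ⟨j, hj⟩ := Nat.exists_eq_succ_of_ne_zero hk0
  have hjk : j < k := by omega
  have hFj : ¬ t < F j := Nat.find_min htop hjk
  push_neg at hFj
  refine ⟨(L+k)*p, (M+k)*q, by positivity, by positivity, ?_⟩
  have h1 : F k ≤ F j + ε := by rw [hj]; exact hstep j
  have : F k - t ≤ ε := by linarith
  have hFk : |F k - t| ≤ ε := abs_le.mpr ⟨by linarith, this⟩
  exact hFk


lemma dense_sub (a b : ℝ) (ha : 0 < a) (hb : 0 < b)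
    (hirr : ∀ k l : ℕ, 0 < k → 0 < l → (k:ℝ)*a ≠ (l:ℝ)*b) :
    Dense (AddSubgroup.closure ({a, b} : Set ℝ) : Set ℝ) := by
  rcases AddSubgroup.dense_or_cyclic (AddSubgroup.closure ({a, b} : Set ℝ)) with h | ⟨c, hc⟩
  · exact h
  · exfalso
    have haS : a ∈ AddSubgroup.closure ({a, b} : Set ℝ) :=
      AddSubgroup.subset_closure (by simp)
    have hbS : b ∈ AddSubgroup.closure ({a, b} : Set ℝ) :=
      AddSubgroup.subset_closure (by simp)
    rw [hc, AddSubgroup.mem_closure_singleton] at haS hbS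
    obtain ⟨n, hn⟩ := haS
    obtain ⟨m, hm⟩ := hbS
    have hma : (m:ℝ)*a = (n:ℝ)*b := by
      rw [← hn, ← hm]
      push_cast [zsmul_eq_mul]
      ring
    have hm0 : m ≠ 0 := by
      rintro rfl
      simp at hma
      rcases hma with h | h
      · rw [h] at hn; simp at hn; linarith
      · linarith
    have hn0 : n ≠ 0 := by
      rintro rfl
      simp at hma
      rcases hma with h | h
      · rw [h] at hm; simp at hm; linarith
      · linarith
    rcases lt_or_gt_of_ne hm0 with hm' | hm'
    · have hn' : n < 0 := by
        by_contra hcon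
        push_neg at hcon
        have h1 : (m:ℝ) < 0 := by exact_mod_cast hm'
        have h2 : (0:ℝ) ≤ (n:ℝ) := by exact_mod_cast hcon
        nlinarith
      apply hirr (-m).toNat (-n).toNat (by omega) (by omega)
      have e1 : (((-m).toNat:ℤ):ℝ) = -(m:ℝ) := by
        rw [Int.toNat_of_nonneg (by omega)]; push_cast; ring
      have e2 : (((-n).toNat:ℤ):ℝ) = -(n:ℝ) := by
        rw [Int.toNat_of_nonneg (by omega)]; push_cast; ring
      push_cast at e1 e2 ⊢
      rw [e1, e2]
      linarith
    · have hn' : 0 < n := by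
        by_contra hcon
        push_neg at hcon
        have h1 : (0:ℝ) < (m:ℝ) := by exact_mod_cast hm'
        have h2 : (n:ℝ) ≤ 0 := by exact_mod_cast hcon
        nlinarith
      apply hirr m.toNat n.toNat (by omega) (by omega)
      have e1 : ((m.toNat:ℤ):ℝ) = (m:ℝ) := by rw [Int.toNat_of_nonneg (by omega)]
      have e2 : ((n.toNat:ℤ):ℝ) = (n:ℝ) := by rw [Int.toNat_of_nonneg (by omega)]
      push_cast at e1 e2 ⊢
      rw [e1, e2]
      linarith

lemma small_step (a b : ℝ) (ha : 0 < a) (hb : 0 < b)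
    (hd : Dense (AddSubgroup.closure ({a, b} : Set ℝ) : Set ℝ)) (ε : ℝ) (hε : 0 < ε) :
    ∃ p q : ℕ, 0 < p ∧ 0 < q ∧
      ((0 < (p:ℝ)*a - q*b ∧ (p:ℝ)*a - q*b < ε) ∨
       (0 < (q:ℝ)*b - p*a ∧ (q:ℝ)*b - p*a < ε)) := by
  set ε' : ℝ := min ε (min a b) with hε'
  have hε'0 : 0 < ε' := by positivity
  have hmem := hd (ε'/2)
  rw [Metric.mem_closure_iff] at hmem
  obtain ⟨y, hyS, hyd⟩ := hmem (ε'/2) (by positivity)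
  rw [Real.dist_eq, abs_lt] at hyd
  have hy0 : 0 < y := by linarith [hyd.1, hyd.2]
  have hyε : y < ε' := by linarith [hyd.1, hyd.2]
  obtain ⟨P, Q, hPQ⟩ := AddSubgroup.mem_closure_pair.mp hyS
  rw [zsmul_eq_mul, zsmul_eq_mul] at hPQ
  have hyε1 : y < ε := lt_of_lt_of_le hyε (min_le_left _ _)
  have hya : y < a := lt_of_lt_of_le hyε (le_trans (min_le_right _ _) (min_le_left _ _))
  have hyb : y < b := lt_of_lt_of_le hyε (le_trans (min_le_right _ _) (min_le_right _ _))
  rcases le_or_gt P 0 with hP | hP <;> rcases le_or_gt Q 0 with hQ | hQ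
  · exfalso
    have h1 : (P:ℝ) ≤ 0 := by exact_mod_cast hP
    have h2 : (Q:ℝ) ≤ 0 := by exact_mod_cast hQ
    nlinarith
  · -- P ≤ 0, Q ≥ 1 : right case, unless P = 0
    have hQ1 : (1:ℝ) ≤ (Q:ℝ) := by exact_mod_cast hQ
    rcases eq_or_lt_of_le hP with hP0 | hP1
    · exfalso
      rw [hP0] at hPQ
      simp at hPQ
      nlinarith
    · have hP1' : (P:ℝ) ≤ -1 := by exact_mod_cast (by omega : P ≤ -1)
      refine ⟨(-P).toNat, Q.toNat, by omega, by omega, Or.inr ?_⟩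
      have e1 : (((-P).toNat:ℕ):ℝ) = -(P:ℝ) := by
        have : (((-P).toNat:ℤ):ℝ) = ((-P : ℤ):ℝ) := by
          rw [Int.toNat_of_nonneg (by omega)]
        push_cast at this ⊢
        linarith
      have e2 : ((Q.toNat:ℕ):ℝ) = (Q:ℝ) := by
        have : ((Q.toNat:ℤ):ℝ) = ((Q : ℤ):ℝ) := by rw [Int.toNat_of_nonneg (by omega)]
        push_cast at this ⊢
        linarith
      rw [e1, e2]
      constructor <;> nlinarith
  · -- P ≥ 1, Q ≤ 0 : left case, unless Q = 0
    have hP1 : (1:ℝ) ≤ (P:ℝ) := by exact_mod_cast hP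
    rcases eq_or_lt_of_le hQ with hQ0 | hQ1
    · exfalso
      rw [hQ0] at hPQ
      simp at hPQ
      nlinarith
    · have hQ1' : (Q:ℝ) ≤ -1 := by exact_mod_cast (by omega : Q ≤ -1)
      refine ⟨P.toNat, (-Q).toNat, by omega, by omega, Or.inl ?_⟩
      have e1 : ((P.toNat:ℕ):ℝ) = (P:ℝ) := by
        have : ((P.toNat:ℤ):ℝ) = ((P : ℤ):ℝ) := by rw [Int.toNat_of_nonneg (by omega)]
        push_cast at this ⊢
        linarith
      have e2 : (((-Q).toNat:ℕ):ℝ) = -(Q:ℝ) := by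
        have : (((-Q).toNat:ℤ):ℝ) = ((-Q : ℤ):ℝ) := by
          rw [Int.toNat_of_nonneg (by omega)]
        push_cast at this ⊢
        linarith
      rw [e1, e2]
      constructor <;> nlinarith
  · exfalso
    have h1 : (1:ℝ) ≤ (P:ℝ) := by exact_mod_cast hP
    have h2 : (1:ℝ) ≤ (Q:ℝ) := by exact_mod_cast hQ
    nlinarith


lemma exp_form (γ : ℝ) (hγ : 0 < γ) (c : ℕ) (n : ℕ) (hn : 0 < n) :
    Real.exp ((n:ℝ)*Real.log γ + (c:ℝ)*Real.log n) = (n:ℝ)^c * γ^n := by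
  have hn0 : (0:ℝ) < (n:ℝ) := by exact_mod_cast hn
  rw [Real.exp_add]
  rw [show (n:ℝ)*Real.log γ = Real.log (γ^n) by rw [Real.log_pow]]
  rw [show (c:ℝ)*Real.log (n:ℝ) = Real.log ((n:ℝ)^c) by rw [Real.log_pow]]
  rw [Real.exp_log (by positivity), Real.exp_log (by positivity)]
  ring


/-- density of { n^d α^n / (m^e β^m) } in the positive reals. -/
theorem stmt5 (α β : ℝ) (hα : 1 < α) (hβ : 1 < β) (h : MultIndep α β) (d e : ℕ) :
    ∀ r : ℝ, 0 < r →
      r ∈ closure {s : ℝ | ∃ n m : ℕ, 0 < n ∧ 0 < m ∧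
        s = (n : ℝ) ^ d * α ^ n / ((m : ℝ) ^ e * β ^ m)} := by
  intro r hr
  have hα0 : (0:ℝ) < α := by linarith
  have hβ0 : (0:ℝ) < β := by linarith
  set a : ℝ := Real.log α with hadef
  set b : ℝ := Real.log β with hbdef
  have ha : 0 < a := Real.log_pos hα
  have hb : 0 < b := Real.log_pos hβ
  have hirr : ∀ k l : ℕ, 0 < k → 0 < l → (k:ℝ)*a ≠ (l:ℝ)*b := by
    intro k l hk hl heq
    apply h k l hk hl
    have h1 : Real.log (α^k) = Real.log (β^l) := by
      rw [Real.log_pow, Real.log_pow]; exact_mod_cast heq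
    have h2 := congrArg Real.exp h1
    rwa [Real.exp_log (by positivity), Real.exp_log (by positivity)] at h2
  have hd := dense_sub a b ha hb hirr
  rw [Metric.mem_closure_iff]
  intro ε hε
  obtain ⟨δ, hδ0, hδ⟩ : ∃ δ > 0, ∀ y : ℝ, |y - Real.log r| < δ → |Real.exp y - r| < ε := by
    have hc : ContinuousAt Real.exp (Real.log r) := Real.continuous_exp.continuousAt
    rw [Metric.continuousAt_iff] at hc
    obtain ⟨δ, hδ0, hδ⟩ := hc ε hε
    refine ⟨δ, hδ0, fun y hy => ?_⟩
    have := hδ (show dist y (Real.log r) < δ by rwa [Real.dist_eq])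
    rwa [Real.dist_eq, Real.exp_log hr] at this
  obtain ⟨p, q, hp, hq, hcase⟩ := small_step a b ha hb hd (δ/4) (by positivity)
  rcases hcase with ⟨h1, h2⟩ | ⟨h1, h2⟩
  · obtain ⟨n, m, hn, hm, habs⟩ := key_lemma a b d e ha hb p q hp hq (Real.log r) (δ/2)
      (by positivity) h1 (by linarith)
    refine ⟨(n:ℝ)^d * α^n / ((m:ℝ)^e * β^m), ⟨n, m, hn, hm, rfl⟩, ?_⟩
    have hX : Real.exp (((n:ℝ)*a + d*Real.log n) - ((m:ℝ)*b + e*Real.log m))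
        = (n:ℝ)^d * α^n / ((m:ℝ)^e * β^m) := by
      rw [hadef, hbdef, Real.exp_sub, exp_form α hα0 d n hn, exp_form β hβ0 e m hm]
    rw [Real.dist_eq, ← hX, abs_sub_comm]
    exact hδ _ (lt_of_le_of_lt habs (by linarith))
  · obtain ⟨n, m, hn, hm, habs⟩ := key_lemma b a e d hb ha q p hq hp (-Real.log r) (δ/2)
      (by positivity) h1 (by linarith)
    refine ⟨(m:ℝ)^d * α^m / ((n:ℝ)^e * β^n), ⟨m, n, hm, hn, rfl⟩, ?_⟩
    have hX : Real.exp (((m:ℝ)*a + d*Real.log m) - ((n:ℝ)*b + e*Real.log n))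
        = (m:ℝ)^d * α^m / ((n:ℝ)^e * β^n) := by
      rw [hadef, hbdef, Real.exp_sub, exp_form α hα0 d m hm, exp_form β hβ0 e n hn]
    rw [Real.dist_eq, ← hX, abs_sub_comm]
    apply hδ
    have : |(((m:ℝ)*a + d*Real.log m) - ((n:ℝ)*b + e*Real.log n)) - Real.log r|
        = |((n:ℝ)*b + e*Real.log n) - ((m:ℝ)*a + d*Real.log m) - (-Real.log r)| := by
      rw [← abs_neg]; congr 1; ring
    rw [this]
    exact lt_of_le_of_lt habs (by linarith)
end Cobham
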